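/- Let L be a first-order language and let ψ be a quantifier-free L-formula with n free variables. If there exist an L-structure M and a tuple a : Fin n → M such that ψ(a) holds in M, then there exist a finite nonempty L-structure M' and a tuple a' : Fin n → M' such that ψ(a') holds in M'. (Quantifier-free formulas have the finite model property for satisfiability.) -/

import Mathlib

open FirstOrder FirstOrder.Language

namespace QFFMP

universe u

variable {L : FirstOrder.Language} {M : Type u} [L.Structure M]

/-- The set of values of all subterms of a term under assignment `v`. -/
def tvals {α : Type*} (v : α → M) : L.Term α → Set M
  | .var i => {v i}
  | .func f ts => insert (Structure.funMap f fun i => (ts i).realize v) (⋃ i, tvals v (ts i))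

lemma tvals_finite {α : Type*} (v : α → M) (t : L.Term α) : (tvals v t).Finite := by
  induction t with
  | var i => exact Set.finite_singleton _
  | func f ts ih => exact (Set.finite_iUnion ih).insert _

lemma realize_mem_tvals {α : Type*} (v : α → M) (t : L.Term α) : t.realize v ∈ tvals v t := by
  cases t with
  | var i => exact Set.mem_singleton _
  | func f ts => exact Set.mem_insert _ _

lemma tvals_sub {α : Type*} (v : α → M) {l} (f : L.Functions l) (ts : Fin l → L.Term α) (i : Fin l) :
    tvals v (ts i) ⊆ tvals v (.func f ts) :=
  (Set.subset_iUnion (fun j => tvals v (ts j)) i).trans (Set.subset_insert _ _)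

/-- Values of all subterms of terms appearing in a bounded formula. -/
def fvals : ∀ {m : ℕ}, (Empty ⊕ Fin m → M) → L.BoundedFormula Empty m → Set M
  | _, _, .falsum => ∅
  | _, w, .equal t₁ t₂ => tvals w t₁ ∪ tvals w t₂
  | _, w, .rel _ ts => ⋃ i, tvals w (ts i)
  | _, w, .imp f g => fvals w f ∪ fvals w g
  | _, _, .all _ => ∅

lemma fvals_finite : ∀ {m : ℕ} (w : Empty ⊕ Fin m → M) (φ : L.BoundedFormula Empty m),
    (fvals w φ).Finite
  | _, _, .falsum => Set.finite_empty
  | _, w, .equal t₁ t₂ => (tvals_finite w t₁).union (tvals_finite w t₂)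
  | _, w, .rel _ ts => Set.finite_iUnion fun i => tvals_finite w (ts i)
  | _, w, .imp f g => (fvals_finite w f).union (fvals_finite w g)
  | _, _, .all _ => Set.finite_empty

variable (A : Set M)

open Classical in
/-- Projection to the finite structure. -/
noncomputable def proj (m : M) : ↥A ⊕ PUnit.{u+1} :=
  if h : m ∈ A then .inl ⟨m, h⟩ else .inr ⟨⟩

lemma proj_eq {m : M} (h : m ∈ A) : proj A m = .inl ⟨m, h⟩ := by
  rw [proj, dif_pos h]

open Classical in
/-- The structure on `↥A ⊕ PUnit`. -/
noncomputable def substruct : L.Structure (↥A ⊕ PUnit.{u+1}) where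
  funMap {k} f x :=
    if h : ∃ y : Fin k → ↥A, ∀ i, x i = .inl (y i) then
      proj A (Structure.funMap f (fun i => (h.choose i : M)))
    else .inr ⟨⟩
  RelMap {k} R x :=
    ∃ y : Fin k → ↥A, (∀ i, x i = .inl (y i)) ∧ Structure.RelMap R (fun i => (y i : M))

attribute [local instance] substruct

lemma term_realize {α : Type*} (w : α → M) (t : L.Term α) (h : tvals w t ⊆ A) :
    t.realize (fun i => proj A (w i)) = Sum.inl ⟨t.realize w, h (realize_mem_tvals w t)⟩ := by
  induction t with
  | var i => exact proj_eq A (h (realize_mem_tvals w (.var i)))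
  | func f ts ih =>
    classical
    have hts : ∀ i, tvals w (ts i) ⊆ A := fun i => (tvals_sub w f ts i).trans h
    have hx : ∀ i, (ts i).realize (fun j => proj A (w j)) =
        Sum.inl (⟨(ts i).realize w, (hts i) (realize_mem_tvals w (ts i))⟩ : ↥A) :=
      fun i => ih i (hts i)
    simp only [Term.realize]
    have hex : ∃ y : Fin _ → ↥A,
        ∀ i, (ts i).realize (fun j => proj A (w j)) = .inl (y i) :=
      ⟨fun i => ⟨(ts i).realize w, (hts i) (realize_mem_tvals w (ts i))⟩, hx⟩
    show (if h' : ∃ y : Fin _ → ↥A,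
        ∀ i, (ts i).realize (fun j => proj A (w j)) = .inl (y i) then
      proj A (Structure.funMap f (fun i => (h'.choose i : M)))
      else .inr ⟨⟩) = _
    rw [dif_pos hex]
    have hcs : ∀ i, (hex.choose i : M) = (ts i).realize w := by
      intro i
      have h1 := hex.choose_spec i
      have h2 := (h1.symm.trans (hx i))
      exact congrArg Subtype.val (Sum.inl.inj h2)
    rw [show (fun i => (hex.choose i : M)) = fun i => (ts i).realize w from funext hcs]
    exact proj_eq A (h (realize_mem_tvals w (.func f ts)))

lemma main_lemma {m : ℕ} (φ : L.BoundedFormula Empty m) (hqf : φ.IsQF) (a : Fin m → M)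
    (hA : fvals (Sum.elim Empty.elim a) φ ⊆ A) :
    BoundedFormula.Realize (M := ↥A ⊕ PUnit.{u+1}) φ Empty.elim
      (fun i => proj A (a i)) ↔ φ.Realize Empty.elim a := by
  set w : Empty ⊕ Fin m → M := Sum.elim Empty.elim a with hw
  have hcomb : (Sum.elim (Empty.elim : Empty → ↥A ⊕ PUnit.{u+1}) fun i => proj A (a i)) =
      fun j => proj A (w j) := by
    funext j; cases j with
    | inl e => exact e.elim
    | inr i => rfl
  induction hqf with
  | falsum => simp [BoundedFormula.Realize]
  | of_isAtomic ha =>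
    cases ha with
    | equal t₁ t₂ =>
      change tvals w t₁ ∪ tvals w t₂ ⊆ A at hA
      have h₁ : tvals w t₁ ⊆ A := (Set.subset_union_left).trans hA
      have h₂ : tvals w t₂ ⊆ A := (Set.subset_union_right).trans hA
      simp only [Term.bdEqual, BoundedFormula.Realize, hcomb, term_realize A w t₁ h₁, term_realize A w t₂ h₂]
      simp
      exact Iff.rfl
    | rel R ts =>
      change (⋃ i, tvals w (ts i)) ⊆ A at hA
      have hts : ∀ i, tvals w (ts i) ⊆ A :=
        fun i => (Set.subset_iUnion (fun j => tvals w (ts j)) i).trans hA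
      simp only [Relations.boundedFormula, BoundedFormula.Realize, hcomb]
      constructor
      · rintro ⟨y, hy, hR⟩
        have : (fun i => (y i : M)) = fun i => (ts i).realize w := by
          funext i
          exact (congrArg Subtype.val
            (Sum.inl.inj ((hy i).symm.trans (term_realize A w (ts i) (hts i)))))
        rwa [this] at hR
      · intro hR
        exact ⟨fun i => ⟨(ts i).realize w, (hts i) (realize_mem_tvals w (ts i))⟩,
          fun i => term_realize A w (ts i) (hts i), hR⟩
  | @imp φ₁ φ₂ h₁ h₂ ih₁ ih₂ =>
    simp only [fvals] at hA
    have s₁ : fvals w φ₁ ⊆ A := (Set.subset_union_left).trans hA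
    have s₂ : fvals w φ₂ ⊆ A := (Set.subset_union_right).trans hA
    simp only [BoundedFormula.Realize]
    exact imp_congr (ih₁ s₁) (ih₂ s₂)

end QFFMP

open QFFMP in
theorem qf_finite_model_property.{u}
    {L : FirstOrder.Language} {n : ℕ} (ψ : L.BoundedFormula Empty n)
    (hqf : ψ.IsQF)
    (h : ∃ (M : Type u) (S : L.Structure M) (a : Fin n → M),
      @FirstOrder.Language.BoundedFormula.Realize L M S Empty n ψ Empty.elim a) :
    ∃ (M' : Type u) (S' : L.Structure M'), Finite M' ∧ Nonempty M' ∧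
      ∃ a' : Fin n → M',
        @FirstOrder.Language.BoundedFormula.Realize L M' S' Empty n ψ Empty.elim a' := by
  obtain ⟨M, S, a, ha⟩ := h
  set w : Empty ⊕ Fin n → M := Sum.elim Empty.elim a with hw
  set A : Set M := fvals w ψ with hA
  haveI : Finite ↥A := (fvals_finite w ψ).to_subtype
  refine ⟨↥A ⊕ PUnit.{u+1}, substruct A, inferInstance, ⟨.inr ⟨⟩⟩,
    fun i => proj A (a i), ?_⟩
  exact (main_lemma A ψ hqf a subset_rfl).mpr ha
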